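/- Let A ∈ ℂ^{n×n}, B ∈ ℂ^{n×m}, C ∈ ℂ^{m×n}, D ∈ ℂ^{m×m}, R := D + Dᴴ, and let X ∈ ℂ^{n×n} be Hermitian with R − BᴴXB ≻ 0 and P_d := X − AᴴXA − F_dᴴ(R − BᴴXB)F_d ≻ 0, where F_d := (R − BᴴXB)⁻¹(C − BᴴXA). Set A_{F_d} := A − BF_d. Then the following are equivalent: (i) Re tr( W_d(X)⁻¹ · [[AᴴΔA − Δ, AᴴΔB],[BᴴΔA, BᴴΔB]] ) = 0 for every Hermitian Δ ∈ ℂ^{n×n}; (ii) A_{F_d} P_d⁻¹ A_{F_d}ᴴ − P_d⁻¹ + B (R − BᴴXB)⁻¹ Bᴴ = 0. -/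
import Mathlib


open Matrix
open scoped ComplexOrder

private lemma trace_fromBlocks' {n m R : Type*} [Fintype n] [Fintype m] [AddCommMonoid R]
    (A : Matrix n n R) (B : Matrix n m R) (C : Matrix m n R) (D : Matrix m m R) :
    (fromBlocks A B C D).trace = A.trace + D.trace := by
  simp [Matrix.trace, Matrix.diag, Fintype.sum_sum_type, fromBlocks]

private lemma mul_invc_left {k l R : Type*} [Fintype k] [DecidableEq k] [Semiring R]
    {A B : Matrix k k R} (h : A * B = 1) (Y : Matrix k l R) : A * (B * Y) = Y := by
  rw [← Matrix.mul_assoc, h, Matrix.one_mul]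

private lemma trace_helper {p q : Type*} [Fintype p] [Fintype q]
    (U : Matrix p q ℂ) (Δ : Matrix q q ℂ) (V : Matrix q p ℂ) :
    (U * (Δ * V)).trace = ((V * U) * Δ).trace := by
  rw [Matrix.trace_mul_comm, Matrix.mul_assoc, Matrix.trace_mul_comm]

private lemma eq_zero_of_trace_re {k : Type*} [Fintype k] {M : Matrix k k ℂ}
    (hM : M.IsHermitian) (h : ((M * M).trace).re = 0) : M = 0 := by
  have h' : ((Mᴴ * M).trace).re = 0 := by rw [hM.eq]; exact h
  have hsum : ((Mᴴ * M).trace).re = ∑ j, ∑ i, Complex.normSq (M i j) := by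
    simp only [Matrix.trace, Matrix.mul_apply, Matrix.diag, Matrix.conjTranspose_apply,
      Complex.re_sum]
    refine Finset.sum_congr rfl fun j _ => Finset.sum_congr rfl fun i _ => ?_
    simp [Complex.normSq_apply, Complex.mul_re]
  rw [hsum] at h'
  have hz : ∀ j ∈ Finset.univ, ∑ i, Complex.normSq (M i j) = 0 :=
    (Finset.sum_eq_zero_iff_of_nonneg
      (fun j _ => Finset.sum_nonneg fun i _ => Complex.normSq_nonneg _)).mp h'
  ext i j
  have hij := (Finset.sum_eq_zero_iff_of_nonneg
    (fun i _ => Complex.normSq_nonneg _)).mp (hz j (Finset.mem_univ _)) i (Finset.mem_univ _)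
  simpa using Complex.normSq_eq_zero.mp hij

/-- characterization of critical points of the discrete-time
barrier function: the gradient condition
`Re tr(W_d(X)⁻¹ · [[AᴴΔA − Δ, AᴴΔB],[BᴴΔA, BᴴΔB]]) = 0` for all Hermitian `Δ`
is equivalent to the Stein equation
`A_{F_d} P_d⁻¹ A_{F_d}ᴴ − P_d⁻¹ + B (R − BᴴXB)⁻¹ Bᴴ = 0`. -/
theorem critical_point_iff_stein_equation_discrete {n m : ℕ}
    (A : Matrix (Fin n) (Fin n) ℂ) (B : Matrix (Fin n) (Fin m) ℂ)
    (C : Matrix (Fin m) (Fin n) ℂ) (D : Matrix (Fin m) (Fin m) ℂ)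
    (X : Matrix (Fin n) (Fin n) ℂ) (hX : X.IsHermitian)
    (R : Matrix (Fin m) (Fin m) ℂ) (hR : R = D + Dᴴ)
    (hRd : (R - Bᴴ * X * B).PosDef)
    (F : Matrix (Fin m) (Fin n) ℂ) (hF : F = (R - Bᴴ * X * B)⁻¹ * (C - Bᴴ * X * A))
    (P : Matrix (Fin n) (Fin n) ℂ)
    (hP : P = X - Aᴴ * X * A - Fᴴ * (R - Bᴴ * X * B) * F)
    (hPpd : P.PosDef)
    (AF : Matrix (Fin n) (Fin n) ℂ) (hAF : AF = A - B * F) :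
    (∀ Δ : Matrix (Fin n) (Fin n) ℂ, Δ.IsHermitian →
        ((fromBlocks (X - Aᴴ * X * A) (Cᴴ - Aᴴ * X * B)
            (C - Bᴴ * X * A) (R - Bᴴ * X * B))⁻¹ *
          fromBlocks (Aᴴ * Δ * A - Δ) (Aᴴ * Δ * B) (Bᴴ * Δ * A) (Bᴴ * Δ * B)).trace.re = 0)
      ↔ AF * P⁻¹ * AFᴴ - P⁻¹ + B * (R - Bᴴ * X * B)⁻¹ * Bᴴ = 0 := by
  set S := R - Bᴴ * X * B with hSdef
  have hSH : S.IsHermitian := hRd.isHermitian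
  have hPH : P.IsHermitian := hPpd.isHermitian
  have hSinv : S * S⁻¹ = 1 :=
    Matrix.mul_nonsing_inv _ ((Matrix.isUnit_iff_isUnit_det S).mp hRd.isUnit)
  have hPinv : P * P⁻¹ = 1 :=
    Matrix.mul_nonsing_inv _ ((Matrix.isUnit_iff_isUnit_det P).mp hPpd.isUnit)
  have hCF : C - Bᴴ * X * A = S * F := by
    rw [hF, ← Matrix.mul_assoc, hSinv, Matrix.one_mul]
  have hCFt : Cᴴ - Aᴴ * X * B = Fᴴ * S := by
    have h := congrArg conjTranspose hCF
    simpa [Matrix.conjTranspose_sub, Matrix.conjTranspose_mul, hX.eq, hSH.eq,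
      Matrix.mul_assoc] using h
  have hTL : X - Aᴴ * X * A = P + Fᴴ * S * F := by rw [hP]; abel
  set V : Matrix (Fin n ⊕ Fin m) (Fin n ⊕ Fin m) ℂ :=
    fromBlocks P⁻¹ (-(P⁻¹ * Fᴴ)) (-(F * P⁻¹)) (S⁻¹ + F * P⁻¹ * Fᴴ) with hV
  have hW : (fromBlocks (X - Aᴴ * X * A) (Cᴴ - Aᴴ * X * B) (C - Bᴴ * X * A) S)⁻¹ = V := by
    apply Matrix.inv_eq_right_inv
    rw [hTL, hCF, hCFt, hV, Matrix.fromBlocks_multiply]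
    have e11 : (P + Fᴴ * S * F) * P⁻¹ + Fᴴ * S * -(F * P⁻¹) = 1 := by
      simp only [Matrix.add_mul, Matrix.mul_neg, Matrix.mul_assoc, hPinv,
        mul_invc_left hSinv, mul_invc_left hPinv]
      abel
    have e12 : (P + Fᴴ * S * F) * -(P⁻¹ * Fᴴ) + Fᴴ * S * (S⁻¹ + F * P⁻¹ * Fᴴ) = 0 := by
      simp only [Matrix.add_mul, Matrix.mul_add, Matrix.mul_neg, Matrix.mul_assoc,
        hSinv, hPinv, mul_invc_left hSinv, mul_invc_left hPinv, Matrix.mul_one]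
      abel
    have e21 : S * F * P⁻¹ + S * -(F * P⁻¹) = 0 := by
      simp only [Matrix.mul_neg, Matrix.mul_assoc]
      abel
    have e22 : S * F * -(P⁻¹ * Fᴴ) + S * (S⁻¹ + F * P⁻¹ * Fᴴ) = 1 := by
      simp only [Matrix.mul_add, Matrix.mul_neg, Matrix.mul_assoc, hSinv,
        mul_invc_left hSinv, mul_invc_left hPinv]
      abel
    rw [e11, e12, e21, e22, Matrix.fromBlocks_one]
  set M : Matrix (Fin n) (Fin n) ℂ := AF * P⁻¹ * AFᴴ - P⁻¹ + B * S⁻¹ * Bᴴ with hM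
  have key : ∀ Δ : Matrix (Fin n) (Fin n) ℂ,
      (V * fromBlocks (Aᴴ * Δ * A - Δ) (Aᴴ * Δ * B) (Bᴴ * Δ * A) (Bᴴ * Δ * B)).trace
        = (M * Δ).trace := by
    intro Δ
    have t1 : (P⁻¹ * (Aᴴ * (Δ * A))).trace = (A * (P⁻¹ * (Aᴴ * Δ))).trace := by
      simpa only [Matrix.mul_assoc] using trace_helper (P⁻¹ * Aᴴ) Δ A
    have t3 : (P⁻¹ * (Fᴴ * (Bᴴ * (Δ * A)))).trace
        = (A * (P⁻¹ * (Fᴴ * (Bᴴ * Δ)))).trace := by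
      simpa only [Matrix.mul_assoc] using trace_helper (P⁻¹ * (Fᴴ * Bᴴ)) Δ A
    have t4 : (F * (P⁻¹ * (Aᴴ * (Δ * B)))).trace
        = (B * (F * (P⁻¹ * (Aᴴ * Δ)))).trace := by
      simpa only [Matrix.mul_assoc] using trace_helper (F * (P⁻¹ * Aᴴ)) Δ B
    have t5 : (S⁻¹ * (Bᴴ * (Δ * B))).trace = (B * (S⁻¹ * (Bᴴ * Δ))).trace := by
      simpa only [Matrix.mul_assoc] using trace_helper (S⁻¹ * Bᴴ) Δ B
    have t6 : (F * (P⁻¹ * (Fᴴ * (Bᴴ * (Δ * B))))).trace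
        = (B * (F * (P⁻¹ * (Fᴴ * (Bᴴ * Δ))))).trace := by
      simpa only [Matrix.mul_assoc] using trace_helper (F * (P⁻¹ * (Fᴴ * Bᴴ))) Δ B
    rw [hV, Matrix.fromBlocks_multiply, trace_fromBlocks', hM, hAF]
    simp only [Matrix.conjTranspose_sub, Matrix.conjTranspose_mul, Matrix.mul_sub,
      Matrix.sub_mul, Matrix.mul_add, Matrix.add_mul, Matrix.neg_mul, Matrix.mul_neg,
      Matrix.trace_add, Matrix.trace_sub, Matrix.trace_neg, Matrix.mul_assoc]
    rw [t1, t3, t4, t5, t6]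
    ring
  have hMH : M.IsHermitian := by
    have h1 : (P⁻¹).IsHermitian := hPH.inv
    have h2 : (S⁻¹).IsHermitian := hSH.inv
    unfold Matrix.IsHermitian
    rw [hM]
    simp only [Matrix.conjTranspose_add, Matrix.conjTranspose_sub, Matrix.conjTranspose_mul,
      Matrix.conjTranspose_conjTranspose, h1.eq, h2.eq, Matrix.mul_assoc]
  constructor
  · intro h
    have hMz : ((M * M).trace).re = 0 := by
      have := h M hMH
      rwa [hW, key M] at this
    exact eq_zero_of_trace_re hMH hMz
  · intro h Δ _
    rw [hW, key Δ, h, Matrix.zero_mul, Matrix.trace_zero, Complex.zero_re]
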